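/- Every user-defined aggregate specified by single, multi, and ereturn rules only (i.e., with no freturn rules) defines a mapping that is monotonic with respect to set containment, and can therefore be used without restriction in recursive rules; equivalently, the logic program giving the aggregate's semantics—consisting of the chain rules, the cagr rules applying single to the first chain element and multi along the chain, and the results rule applying ereturn along the chain—is a positive choice program, hence monotonic by the monotonicity theorem for positive choice programs. -/

import Mathlib

/-!
# STATEMENT 14

Every user-defined aggregate specified by `single`, `multi`, and `ereturn`
rules only (i.e. with no `freturn` rules) defines a mapping that is monotonic
with respect to set containment, and can therefore be used without restriction
in recursive rules.  Equivalently, the logic program giving the aggregate's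
semantics — consisting of the chain rules

  `chain(nil,nil).`
  `chain(X,Y) ← chain(_,X), d(Y), choice((X),(Y)), choice((Y),(X)).`

the `cagr` rules applying `single` to the first chain element and `multi`
along the chain,

  `cagr(Y,New)  ← chain(nil,Y), Y ≠ nil, single(Y,New).`
  `cagr(Y2,New) ← chain(Y1,Y2), cagr(Y1,Old), multi(Y2,Old,New).`

and the `results` rule applying `ereturn` along the chain

  `results(Yield) ← chain(Y1,Y2), cagr(Y1,Old), ereturn(Y2,Old,Yield).`

is a *positive choice program*, hence monotonic by the monotonicity theorem
for positive choice programs: enlarging the aggregated set `d` extends every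
choice model (and with it the set of early returns `results`).

The framework is as in Statement 0, with rules extended by (built-in)
inequality goals `t ≠ t'` (needed for the goal `Y ≠ nil`); choice models are
total stable models of the first-order equivalent `foe`.  The user-supplied
`single`, `multi` and `ereturn` relations enter the program as database
relations.
-/

/-- A ground normal logic-program rule over ground atoms `α`. -/
structure GRule (α : Type) where
  head : α
  pos : Set α
  neg : Set α

/-- A ground normal logic program is a set of ground rules. -/
abbrev GProgram (α : Type) := Set (GRule α)

/-- `M` satisfies a ground rule. -/
def GRule.Sat {α : Type} (r : GRule α) (M : Set α) : Prop :=
  r.pos ⊆ M → (∀ a ∈ r.neg, a ∉ M) → r.head ∈ M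

/-- `M` is a model of (i.e. closed under) the program `P`. -/
def IsModel {α : Type} (P : GProgram α) (M : Set α) : Prop := ∀ r ∈ P, r.Sat M

/-- The Gelfond–Lifschitz reduct of `P` with respect to `M`: delete every rule
whose negative body intersects `M`, and delete the negative bodies of the
remaining rules. -/
def reduct {α : Type} (P : GProgram α) (M : Set α) : GProgram α :=
  {r | ∃ r' ∈ P, (∀ a ∈ r'.neg, a ∉ M) ∧ r = ⟨r'.head, r'.pos, ∅⟩}

/-- The least (Herbrand) model of a program: the intersection of all models. -/
def leastModel {α : Type} (P : GProgram α) : Set α := ⋂₀ {N | IsModel P N}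

/-- `M` is a (total, two-valued) stable model of `P` in the sense of
Gelfond–Lifschitz: `M` is the least model of the reduct of `P` by `M`.
Every such model is total: each atom is either true (in `M`) or false. -/
def IsStableModel {α : Type} (P : GProgram α) (M : Set α) : Prop :=
  M = leastModel (reduct P M)

/-! ## Datalog with choice goals -/

/-- Terms: variables (named by naturals) and constants from `C`. -/
inductive Term (C : Type) where
  | var (v : ℕ)
  | const (c : C)

/-- A relational schema: predicate symbols with arities. -/
structure Schema where
  pred : Type
  ar : pred → ℕ

/-- A (possibly non-ground) atom over schema `S` and constants `C`. -/
structure Atom (S : Schema) (C : Type) where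
  p : S.pred
  args : Fin (S.ar p) → Term C

/-- A ground atom. -/
structure GAtom (S : Schema) (C : Type) where
  p : S.pred
  args : Fin (S.ar p) → C

/-- A Datalog rule whose body may additionally contain choice goals
`choice((X),(Y))`, recorded in `cgoals` as pairs `(X, Y)` of disjoint lists of
variables, with nonempty right side `Y`. -/
structure CRule (S : Schema) (C : Type) where
  head : Atom S C
  pos : List (Atom S C)
  neg : List (Atom S C)
  cgoals : List (List ℕ × List ℕ)
  cgoals_disjoint : ∀ g ∈ cgoals, ∀ v ∈ g.1, v ∉ g.2
  cgoals_right_ne : ∀ g ∈ cgoals, g.2 ≠ []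
  /-- inequality goals `t ≠ t'` in the body (e.g. `Y ≠ nil`) -/
  ineqs : List (Term C × Term C)

/-- A choice program: a finite list of rules, possibly with choice goals. -/
abbrev CProgram (S : Schema) (C : Type) := List (CRule S C)

/-- A choice program is *positive* when its non-choice goals contain no
negation. -/
def CProgram.Positive {S : Schema} {C : Type} (P : CProgram S C) : Prop :=
  ∀ r ∈ P, r.neg = []

def Term.eval {C : Type} (ν : ℕ → C) : Term C → C
  | .var v => ν v
  | .const c => c

def Atom.ground {S : Schema} {C : Type} (a : Atom S C) (ν : ℕ → C) : GAtom S C :=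
  ⟨a.p, fun i => (a.args i).eval ν⟩

/-- `W`: the list of all variables occurring in the choice goals of a rule. -/
def CRule.W {S : Schema} {C : Type} (r : CRule S C) : List ℕ :=
  (r.cgoals.flatMap fun g => g.1 ++ g.2).dedup

/-- Atoms of the first-order equivalent `foe(P)`: the original (base) atoms
together with `chosen_r` and `diffChoice_r` atoms for each choice rule `r`
(rules are referred to by their position in the program). -/
inductive FAtom (S : Schema) (C : Type) where
  | base (a : GAtom S C)
  | chosen (r : ℕ) (w : List C)
  | diff (r : ℕ) (w : List C)

/-- The (ground) positive body of an instantiated rule, as base atoms. -/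
def posBody {S : Schema} {C : Type} (r : CRule S C) (ν : ℕ → C) : Set (FAtom S C) :=
  {x | ∃ a ∈ r.pos, x = FAtom.base (a.ground ν)}

/-- The (ground) negative body of an instantiated rule, as base atoms. -/
def negBody {S : Schema} {C : Type} (r : CRule S C) (ν : ℕ → C) : Set (FAtom S C) :=
  {x | ∃ a ∈ r.neg, x = FAtom.base (a.ground ν)}

/-- The first-order equivalent `foe(P)` of a choice program `P` over the
database `edb`, given as the set of its ground instances:

* facts of the database;
* rules without choice goals, unchanged;
* for each choice rule `r : A ← B(Z), choice((X₁),(Y₁)), …, choice((Xₖ),(Yₖ))`: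
  - `r′ : A ← B(Z), chosenᵣ(W)` where `W` lists all variables of the choice goals,
  - `chosenᵣ(W) ← B(Z), ¬ diffChoiceᵣ(W)`,
  - for each choice goal `choice((Xᵢ),(Yᵢ))`:
    `diffChoiceᵣ(W) ← chosenᵣ(W′), Yᵢ ≠ Yᵢ′` where `W′` agrees with `W` on `Xᵢ`
    (all other variables being fresh primed copies). -/
def foe {S : Schema} {C : Type} (P : CProgram S C) (edb : Set (GAtom S C)) :
    GProgram (FAtom S C) :=
  {r | ∃ a ∈ edb, r = ⟨FAtom.base a, ∅, ∅⟩} ∪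
  {r | ∃ i : Fin P.length, ∃ ν : ℕ → C,
        (∀ q ∈ (P.get i).ineqs, q.1.eval ν ≠ q.2.eval ν) ∧ (P.get i).cgoals = [] ∧
        r = ⟨FAtom.base ((P.get i).head.ground ν), posBody (P.get i) ν,
             negBody (P.get i) ν⟩} ∪
  {r | ∃ i : Fin P.length, ∃ ν : ℕ → C,
        (∀ q ∈ (P.get i).ineqs, q.1.eval ν ≠ q.2.eval ν) ∧ (P.get i).cgoals ≠ [] ∧
        r = ⟨FAtom.base ((P.get i).head.ground ν),
             insert (FAtom.chosen i ((P.get i).W.map ν)) (posBody (P.get i) ν),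
             negBody (P.get i) ν⟩} ∪
  {r | ∃ i : Fin P.length, ∃ ν : ℕ → C,
        (∀ q ∈ (P.get i).ineqs, q.1.eval ν ≠ q.2.eval ν) ∧ (P.get i).cgoals ≠ [] ∧
        r = ⟨FAtom.chosen i ((P.get i).W.map ν), posBody (P.get i) ν,
             insert (FAtom.diff i ((P.get i).W.map ν)) (negBody (P.get i) ν)⟩} ∪
  {r | ∃ i : Fin P.length, ∃ g ∈ (P.get i).cgoals, ∃ ν ν' : ℕ → C,
        (∀ v ∈ g.1, ν v = ν' v) ∧ (∃ v ∈ g.2, ν v ≠ ν' v) ∧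
        r = ⟨FAtom.diff i ((P.get i).W.map ν),
             {FAtom.chosen i ((P.get i).W.map ν')}, ∅⟩}

/-! ## The program defining the semantics of a user-defined aggregate -/

inductive UPred : Type where
  | d | single | multi | ereturn | chain | cagr | results
  deriving DecidableEq

def uAr : UPred → ℕ
  | .d => 1
  | .single => 2
  | .multi => 3
  | .ereturn => 3
  | .chain => 2
  | .cagr => 2
  | .results => 1

def uSchema : Schema := ⟨UPred, uAr⟩

/-- The (positive choice) program giving the semantics of a user-defined
aggregate specified by `single`, `multi` and `ereturn` rules only (no
`freturn`), over the set `d`.  Variables: in the chain rule `X = 0`, `Y = 1`,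
`Z = 2`; in the `cagr`/`results` rules as indicated. -/
def udaProg (C : Type) (nil : C) : CProgram uSchema C :=
  [ -- chain(nil,nil).
    ⟨⟨UPred.chain, ![Term.const nil, Term.const nil]⟩, [], [], [],
      by decide, by decide, []⟩,
    -- chain(X,Y) ← chain(Z,X), d(Y), choice((X),(Y)), choice((Y),(X)).
    ⟨⟨UPred.chain, ![Term.var 0, Term.var 1]⟩,
      [⟨UPred.chain, ![Term.var 2, Term.var 0]⟩, ⟨UPred.d, ![Term.var 1]⟩],
      [], [([0], [1]), ([1], [0])], by decide, by decide, []⟩,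
    -- cagr(Y,New) ← chain(nil,Y), Y ≠ nil, single(Y,New).   (Y = 0, New = 1)
    ⟨⟨UPred.cagr, ![Term.var 0, Term.var 1]⟩,
      [⟨UPred.chain, ![Term.const nil, Term.var 0]⟩,
       ⟨UPred.single, ![Term.var 0, Term.var 1]⟩],
      [], [], by decide, by decide, [(Term.var 0, Term.const nil)]⟩,
    -- cagr(Y2,New) ← chain(Y1,Y2), cagr(Y1,Old), multi(Y2,Old,New).
    --   (Y1 = 0, Y2 = 1, Old = 2, New = 3)
    ⟨⟨UPred.cagr, ![Term.var 1, Term.var 3]⟩,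
      [⟨UPred.chain, ![Term.var 0, Term.var 1]⟩,
       ⟨UPred.cagr, ![Term.var 0, Term.var 2]⟩,
       ⟨UPred.multi, ![Term.var 1, Term.var 2, Term.var 3]⟩],
      [], [], by decide, by decide, []⟩,
    -- results(Yield) ← chain(Y1,Y2), cagr(Y1,Old), ereturn(Y2,Old,Yield).
    --   (Y1 = 0, Y2 = 1, Old = 2, Yield = 3)
    ⟨⟨UPred.results, ![Term.var 3]⟩,
      [⟨UPred.chain, ![Term.var 0, Term.var 1]⟩,
       ⟨UPred.cagr, ![Term.var 0, Term.var 2]⟩,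
       ⟨UPred.ereturn, ![Term.var 1, Term.var 2, Term.var 3]⟩],
      [], [], by decide, by decide, []⟩ ]

/-- The database: the aggregated set `d = D` and the user-supplied `single`,
`multi` and `ereturn` relations. -/
def udaEdb {C : Type} (D : Set C) (sg : C → C → Prop) (ml er : C → C → C → Prop) :
    Set (GAtom uSchema C) :=
  {a | ∃ c ∈ D, a = ⟨UPred.d, ![c]⟩} ∪
  {a | ∃ x y, sg x y ∧ a = ⟨UPred.single, ![x, y]⟩} ∪
  {a | ∃ x y z, ml x y z ∧ a = ⟨UPred.multi, ![x, y, z]⟩} ∪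
  {a | ∃ x y z, er x y z ∧ a = ⟨UPred.ereturn, ![x, y, z]⟩}

/-! ### Auxiliary development -/

section General

variable {α : Type}

lemma leastModel_subset {P : GProgram α} {N : Set α} (h : IsModel P N) :
    leastModel P ⊆ N :=
  Set.sInter_subset_of_mem h

lemma isModel_leastModel {P : GProgram α} (h : ∀ r ∈ P, r.neg = ∅) :
    IsModel P (leastModel P) := by
  intro r hr hpos _
  rw [leastModel, Set.mem_sInter]
  intro N hN
  refine hN r hr (hpos.trans (leastModel_subset hN)) ?_
  intro a ha
  rw [h r hr] at ha
  exact absurd ha (Set.notMem_empty a)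

lemma reduct_neg {P : GProgram α} {M : Set α} : ∀ r ∈ reduct P M, r.neg = ∅ := by
  rintro r ⟨r', _, _, rfl⟩; rfl

end General

section QdDef

variable {S : Schema} {C : Type}

lemma negBody_empty {r : CRule S C} (h : r.neg = []) (ν : ℕ → C) :
    negBody r ν = ∅ := by
  ext x; simp [negBody, h]

/-- The reduct of `foe P e` by `M`, for a positive `P`, described directly in
terms of the predicate `δ` telling which `diff` atoms are in `M`. -/
def Qd (P : CProgram S C) (e : Set (GAtom S C)) (δ : ℕ → List C → Prop) :
    GProgram (FAtom S C) :=
  {r | ∃ a ∈ e, r = ⟨FAtom.base a, ∅, ∅⟩} ∪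
  {r | ∃ i : Fin P.length, ∃ ν : ℕ → C,
        (∀ q ∈ (P.get i).ineqs, q.1.eval ν ≠ q.2.eval ν) ∧ (P.get i).cgoals = [] ∧
        r = ⟨FAtom.base ((P.get i).head.ground ν), posBody (P.get i) ν, ∅⟩} ∪
  {r | ∃ i : Fin P.length, ∃ ν : ℕ → C,
        (∀ q ∈ (P.get i).ineqs, q.1.eval ν ≠ q.2.eval ν) ∧ (P.get i).cgoals ≠ [] ∧
        r = ⟨FAtom.base ((P.get i).head.ground ν),
             insert (FAtom.chosen i ((P.get i).W.map ν)) (posBody (P.get i) ν), ∅⟩} ∪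
  {r | ∃ i : Fin P.length, ∃ ν : ℕ → C,
        (∀ q ∈ (P.get i).ineqs, q.1.eval ν ≠ q.2.eval ν) ∧ (P.get i).cgoals ≠ [] ∧
        ¬ δ i ((P.get i).W.map ν) ∧
        r = ⟨FAtom.chosen i ((P.get i).W.map ν), posBody (P.get i) ν, ∅⟩} ∪
  {r | ∃ i : Fin P.length, ∃ g ∈ (P.get i).cgoals, ∃ ν ν' : ℕ → C,
        (∀ v ∈ g.1, ν v = ν' v) ∧ (∃ v ∈ g.2, ν v ≠ ν' v) ∧
        r = ⟨FAtom.diff i ((P.get i).W.map ν),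
             {FAtom.chosen i ((P.get i).W.map ν')}, ∅⟩}

lemma Qd_neg {P : CProgram S C} {e δ} : ∀ r ∈ Qd P e δ, r.neg = ∅ := by
  rintro r ((((⟨a, ha, rfl⟩ | ⟨i, ν, hq, hc, rfl⟩) | ⟨i, ν, hq, hc, rfl⟩) |
    ⟨i, ν, hq, hc, hδ, rfl⟩) | ⟨i, g, hg, ν, ν', ha, hd, rfl⟩) <;> rfl

lemma reduct_foe_eq {P : CProgram S C} (hP : ∀ r ∈ P, r.neg = [])
    (e : Set (GAtom S C)) (M : Set (FAtom S C)) :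
    reduct (foe P e) M = Qd P e (fun i w => FAtom.diff i w ∈ M) := by
  have hnb : ∀ (i : Fin P.length) (ν : ℕ → C), negBody (P.get i) ν = ∅ := by
    intro i ν; exact negBody_empty (hP _ (List.get_mem P i)) ν
  ext r
  constructor
  · rintro ⟨r', hr', hneg, rfl⟩
    rcases hr' with ((((⟨a, ha, rfl⟩ | ⟨i, ν, hq, hc, rfl⟩) | ⟨i, ν, hq, hc, rfl⟩) |
      ⟨i, ν, hq, hc, rfl⟩) | ⟨i, g, hg, ν, ν', ha, hd, rfl⟩)
    · exact Or.inl (Or.inl (Or.inl (Or.inl ⟨a, ha, rfl⟩)))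
    · exact Or.inl (Or.inl (Or.inl (Or.inr ⟨i, ν, hq, hc, rfl⟩)))
    · exact Or.inl (Or.inl (Or.inr ⟨i, ν, hq, hc, rfl⟩))
    · refine Or.inl (Or.inr ⟨i, ν, hq, hc, ?_, rfl⟩)
      exact hneg _ (Set.mem_insert _ _)
    · exact Or.inr ⟨i, g, hg, ν, ν', ha, hd, rfl⟩
  · rintro ((((⟨a, ha, rfl⟩ | ⟨i, ν, hq, hc, rfl⟩) | ⟨i, ν, hq, hc, rfl⟩) |
      ⟨i, ν, hq, hc, hδ, rfl⟩) | ⟨i, g, hg, ν, ν', ha, hd, rfl⟩)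
    · refine ⟨⟨FAtom.base a, ∅, ∅⟩, Or.inl (Or.inl (Or.inl (Or.inl ⟨a, ha, rfl⟩))), ?_, rfl⟩
      intro x hx; exact absurd hx (Set.notMem_empty x)
    · refine ⟨_, Or.inl (Or.inl (Or.inl (Or.inr ⟨i, ν, hq, hc, rfl⟩))), ?_, ?_⟩
      · intro x hx; rw [hnb i ν] at hx; exact absurd hx (Set.notMem_empty x)
      · rw [hnb i ν]
    · refine ⟨_, Or.inl (Or.inl (Or.inr ⟨i, ν, hq, hc, rfl⟩)), ?_, ?_⟩
      · intro x hx; rw [hnb i ν] at hx; exact absurd hx (Set.notMem_empty x)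
      · rw [hnb i ν]
    · refine ⟨_, Or.inl (Or.inr ⟨i, ν, hq, hc, rfl⟩), ?_, rfl⟩
      intro x hx
      rw [hnb i ν] at hx
      rcases hx with hx | hx
      · exact hx ▸ hδ
      · exact absurd hx (Set.notMem_empty x)
    · refine ⟨_, Or.inr ⟨i, g, hg, ν, ν', ha, hd, rfl⟩, ?_, rfl⟩
      intro x hx; exact absurd hx (Set.notMem_empty x)
  end QdDef
/-! ### The aggregate program: atoms and rule data -/

section UDA

variable {C : Type}

/-- base `d` atom -/
abbrev dA (y : C) : FAtom uSchema C := FAtom.base ⟨UPred.d, ![y]⟩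
abbrev sA (x y : C) : FAtom uSchema C := FAtom.base ⟨UPred.single, ![x, y]⟩
abbrev mA (x y z : C) : FAtom uSchema C := FAtom.base ⟨UPred.multi, ![x, y, z]⟩
abbrev eA (x y z : C) : FAtom uSchema C := FAtom.base ⟨UPred.ereturn, ![x, y, z]⟩
abbrev chA (z x : C) : FAtom uSchema C := FAtom.base ⟨UPred.chain, ![z, x]⟩
abbrev cgA (x y : C) : FAtom uSchema C := FAtom.base ⟨UPred.cagr, ![x, y]⟩
abbrev rA (y : C) : FAtom uSchema C := FAtom.base ⟨UPred.results, ![y]⟩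
/-- `chosen` atom for the chain edge `x → y` -/
abbrev choA (x y : C) : FAtom uSchema C := FAtom.chosen 1 [y, x]
/-- `diffChoice` atom for the chain edge `x → y` -/
abbrev dfA (x y : C) : FAtom uSchema C := FAtom.diff 1 [y, x]

lemma gd (t₁ : Term C) (ν : ℕ → C) :
    (⟨UPred.d, ![t₁]⟩ : Atom uSchema C).ground ν = ⟨UPred.d, ![t₁.eval ν]⟩ := by
  unfold Atom.ground; congr 1; funext i; fin_cases i <;> rfl

lemma gresults (t₁ : Term C) (ν : ℕ → C) :
    (⟨UPred.results, ![t₁]⟩ : Atom uSchema C).ground ν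
      = ⟨UPred.results, ![t₁.eval ν]⟩ := by
  unfold Atom.ground; congr 1; funext i; fin_cases i <;> rfl

lemma gchain (t₁ t₂ : Term C) (ν : ℕ → C) :
    (⟨UPred.chain, ![t₁, t₂]⟩ : Atom uSchema C).ground ν
      = ⟨UPred.chain, ![t₁.eval ν, t₂.eval ν]⟩ := by
  unfold Atom.ground; congr 1; funext i; fin_cases i <;> rfl

lemma gsingle (t₁ t₂ : Term C) (ν : ℕ → C) :
    (⟨UPred.single, ![t₁, t₂]⟩ : Atom uSchema C).ground ν
      = ⟨UPred.single, ![t₁.eval ν, t₂.eval ν]⟩ := by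
  unfold Atom.ground; congr 1; funext i; fin_cases i <;> rfl

lemma gcagr (t₁ t₂ : Term C) (ν : ℕ → C) :
    (⟨UPred.cagr, ![t₁, t₂]⟩ : Atom uSchema C).ground ν
      = ⟨UPred.cagr, ![t₁.eval ν, t₂.eval ν]⟩ := by
  unfold Atom.ground; congr 1; funext i; fin_cases i <;> rfl

lemma gmulti (t₁ t₂ t₃ : Term C) (ν : ℕ → C) :
    (⟨UPred.multi, ![t₁, t₂, t₃]⟩ : Atom uSchema C).ground ν
      = ⟨UPred.multi, ![t₁.eval ν, t₂.eval ν, t₃.eval ν]⟩ := by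
  unfold Atom.ground; congr 1; funext i; fin_cases i <;> rfl

lemma ger (t₁ t₂ t₃ : Term C) (ν : ℕ → C) :
    (⟨UPred.ereturn, ![t₁, t₂, t₃]⟩ : Atom uSchema C).ground ν
      = ⟨UPred.ereturn, ![t₁.eval ν, t₂.eval ν, t₃.eval ν]⟩ := by
  unfold Atom.ground; congr 1; funext i; fin_cases i <;> rfl

variable (nil : C)

lemma udaProg_pos : ∀ r ∈ udaProg C nil, r.neg = [] := by
  intro r hr
  simp only [udaProg, List.mem_cons, List.not_mem_nil, or_false] at hr
  rcases hr with rfl | rfl | rfl | rfl | rfl <;> rfl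

lemma hd0 (hk : 0 < (udaProg C nil).length) (ν : ℕ → C) :
    FAtom.base (Atom.ground ((udaProg C nil).get ⟨0, hk⟩).head ν) = chA nil nil := by
  show FAtom.base (Atom.ground (⟨UPred.chain, ![Term.const nil, Term.const nil]⟩ : Atom uSchema C) ν) = chA nil nil
  rw [gchain]; rfl

lemma pb0 (hk : 0 < (udaProg C nil).length) (ν : ℕ → C) :
    posBody ((udaProg C nil).get ⟨0, hk⟩) ν = ∅ := by
  ext f
  show (∃ a ∈ ([] : List (Atom uSchema C)), f = FAtom.base (a.ground ν)) ↔ _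
  simp

lemma hd1 (hk : 1 < (udaProg C nil).length) (ν : ℕ → C) :
    FAtom.base (Atom.ground ((udaProg C nil).get ⟨1, hk⟩).head ν)
      = chA (ν 0) (ν 1) := by
  show FAtom.base (Atom.ground (⟨UPred.chain, ![Term.var 0, Term.var 1]⟩ : Atom uSchema C) ν) = chA (ν 0) (ν 1)
  rw [gchain]; rfl

lemma pb1 (hk : 1 < (udaProg C nil).length) (ν : ℕ → C) :
    posBody ((udaProg C nil).get ⟨1, hk⟩) ν = {chA (ν 2) (ν 0), dA (ν 1)} := by
  ext f
  show (∃ a ∈ [(⟨UPred.chain, ![Term.var 2, Term.var 0]⟩ : Atom uSchema C),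
      ⟨UPred.d, ![Term.var 1]⟩], f = FAtom.base (a.ground ν)) ↔ _
  simp only [List.mem_cons, List.not_mem_nil, or_false, Set.mem_insert_iff,
    Set.mem_singleton_iff]
  constructor
  · rintro ⟨a, (rfl | rfl), rfl⟩
    · left; rw [gchain]; rfl
    · right; rw [gd]; rfl
  · rintro (rfl | rfl)
    · exact ⟨_, Or.inl rfl, by rw [gchain]; rfl⟩
    · exact ⟨_, Or.inr rfl, by rw [gd]; rfl⟩

lemma W1 (hk : 1 < (udaProg C nil).length) :
    ((udaProg C nil).get ⟨1, hk⟩).W = [1, 0] := rfl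

lemma hd2 (hk : 2 < (udaProg C nil).length) (ν : ℕ → C) :
    FAtom.base (Atom.ground ((udaProg C nil).get ⟨2, hk⟩).head ν)
      = cgA (ν 0) (ν 1) := by
  show FAtom.base (Atom.ground (⟨UPred.cagr, ![Term.var 0, Term.var 1]⟩ : Atom uSchema C) ν) = cgA (ν 0) (ν 1)
  rw [gcagr]; rfl

lemma pb2 (hk : 2 < (udaProg C nil).length) (ν : ℕ → C) :
    posBody ((udaProg C nil).get ⟨2, hk⟩) ν = {chA nil (ν 0), sA (ν 0) (ν 1)} := by
  ext f
  show (∃ a ∈ [(⟨UPred.chain, ![Term.const nil, Term.var 0]⟩ : Atom uSchema C),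
      ⟨UPred.single, ![Term.var 0, Term.var 1]⟩], f = FAtom.base (a.ground ν)) ↔ _
  simp only [List.mem_cons, List.not_mem_nil, or_false, Set.mem_insert_iff,
    Set.mem_singleton_iff]
  constructor
  · rintro ⟨a, (rfl | rfl), rfl⟩
    · left; rw [gchain]; rfl
    · right; rw [gsingle]; rfl
  · rintro (rfl | rfl)
    · exact ⟨_, Or.inl rfl, by rw [gchain]; rfl⟩
    · exact ⟨_, Or.inr rfl, by rw [gsingle]; rfl⟩

lemma hd3 (hk : 3 < (udaProg C nil).length) (ν : ℕ → C) :
    FAtom.base (Atom.ground ((udaProg C nil).get ⟨3, hk⟩).head ν)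
      = cgA (ν 1) (ν 3) := by
  show FAtom.base (Atom.ground (⟨UPred.cagr, ![Term.var 1, Term.var 3]⟩ : Atom uSchema C) ν) = cgA (ν 1) (ν 3)
  rw [gcagr]; rfl

lemma pb3 (hk : 3 < (udaProg C nil).length) (ν : ℕ → C) :
    posBody ((udaProg C nil).get ⟨3, hk⟩) ν
      = {chA (ν 0) (ν 1), cgA (ν 0) (ν 2), mA (ν 1) (ν 2) (ν 3)} := by
  ext f
  show (∃ a ∈ [(⟨UPred.chain, ![Term.var 0, Term.var 1]⟩ : Atom uSchema C),
      ⟨UPred.cagr, ![Term.var 0, Term.var 2]⟩,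
      ⟨UPred.multi, ![Term.var 1, Term.var 2, Term.var 3]⟩],
      f = FAtom.base (a.ground ν)) ↔ _
  simp only [List.mem_cons, List.not_mem_nil, or_false, Set.mem_insert_iff,
    Set.mem_singleton_iff]
  constructor
  · rintro ⟨a, (rfl | rfl | rfl), rfl⟩
    · left; rw [gchain]; rfl
    · right; left; rw [gcagr]; rfl
    · right; right; rw [gmulti]; rfl
  · rintro (rfl | rfl | rfl)
    · exact ⟨_, Or.inl rfl, by rw [gchain]; rfl⟩
    · exact ⟨_, Or.inr (Or.inl rfl), by rw [gcagr]; rfl⟩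
    · exact ⟨_, Or.inr (Or.inr rfl), by rw [gmulti]; rfl⟩

lemma hd4 (hk : 4 < (udaProg C nil).length) (ν : ℕ → C) :
    FAtom.base (Atom.ground ((udaProg C nil).get ⟨4, hk⟩).head ν) = rA (ν 3) := by
  show FAtom.base (Atom.ground (⟨UPred.results, ![Term.var 3]⟩ : Atom uSchema C) ν) = rA (ν 3)
  rw [gresults]; rfl

lemma pb4 (hk : 4 < (udaProg C nil).length) (ν : ℕ → C) :
    posBody ((udaProg C nil).get ⟨4, hk⟩) ν
      = {chA (ν 0) (ν 1), cgA (ν 0) (ν 2), eA (ν 1) (ν 2) (ν 3)} := by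
  ext f
  show (∃ a ∈ [(⟨UPred.chain, ![Term.var 0, Term.var 1]⟩ : Atom uSchema C),
      ⟨UPred.cagr, ![Term.var 0, Term.var 2]⟩,
      ⟨UPred.ereturn, ![Term.var 1, Term.var 2, Term.var 3]⟩],
      f = FAtom.base (a.ground ν)) ↔ _
  simp only [List.mem_cons, List.not_mem_nil, or_false, Set.mem_insert_iff,
    Set.mem_singleton_iff]
  constructor
  · rintro ⟨a, (rfl | rfl | rfl), rfl⟩
    · left; rw [gchain]; rfl
    · right; left; rw [gcagr]; rfl
    · right; right; rw [ger]; rfl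
  · rintro (rfl | rfl | rfl)
    · exact ⟨_, Or.inl rfl, by rw [gchain]; rfl⟩
    · exact ⟨_, Or.inr (Or.inl rfl), by rw [gcagr]; rfl⟩
    · exact ⟨_, Or.inr (Or.inr rfl), by rw [ger]; rfl⟩

end UDA
section Closed

variable {C : Type}

lemma pair_subset {α : Type} {a b : α} {N : Set α} (ha : a ∈ N) (hb : b ∈ N) :
    ({a, b} : Set α) ⊆ N :=
  Set.insert_subset_iff.mpr ⟨ha, Set.singleton_subset_iff.mpr hb⟩

lemma triple_subset {α : Type} {a b c : α} {N : Set α} (ha : a ∈ N) (hb : b ∈ N)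
    (hc : c ∈ N) : ({a, b, c} : Set α) ⊆ N :=
  Set.insert_subset_iff.mpr ⟨ha, pair_subset hb hc⟩

variable (nil : C)

lemma lt0 : (0:ℕ) < (udaProg C nil).length := (by norm_num : (0:ℕ) < 5)
lemma lt1 : (1:ℕ) < (udaProg C nil).length := (by norm_num : (1:ℕ) < 5)
lemma lt2 : (2:ℕ) < (udaProg C nil).length := (by norm_num : (2:ℕ) < 5)
lemma lt3 : (3:ℕ) < (udaProg C nil).length := (by norm_num : (3:ℕ) < 5)
lemma lt4 : (4:ℕ) < (udaProg C nil).length := (by norm_num : (4:ℕ) < 5)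

/-- Closure conditions equivalent to being a model of `Qd (udaProg C nil) e δ`. -/
def Closed (e : Set (GAtom uSchema C)) (δ : ℕ → List C → Prop)
    (N : Set (FAtom uSchema C)) : Prop :=
  (∀ a ∈ e, FAtom.base a ∈ N) ∧
  (chA nil nil ∈ N) ∧
  (∀ x y : C, x ≠ nil → chA nil x ∈ N → sA x y ∈ N → cgA x y ∈ N) ∧
  (∀ a b o n : C, chA a b ∈ N → cgA a o ∈ N → mA b o n ∈ N → cgA b n ∈ N) ∧
  (∀ a b o yl : C, chA a b ∈ N → cgA a o ∈ N → eA b o yl ∈ N → rA yl ∈ N) ∧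
  (∀ x y z : C, choA x y ∈ N → chA z x ∈ N → dA y ∈ N → chA x y ∈ N) ∧
  (∀ x y z : C, ¬ δ 1 [y, x] → chA z x ∈ N → dA y ∈ N → choA x y ∈ N) ∧
  (∀ x y y' : C, y' ≠ y → choA x y' ∈ N → dfA x y ∈ N) ∧
  (∀ x x' y : C, x' ≠ x → choA x' y ∈ N → dfA x y ∈ N)

lemma isModel_Qd_uda {e : Set (GAtom uSchema C)} {δ : ℕ → List C → Prop}
    {N : Set (FAtom uSchema C)} :
    IsModel (Qd (udaProg C nil) e δ) N ↔ Closed nil e δ N := by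
  constructor
  · intro h
    refine ⟨?_, ?_, ?_, ?_, ?_, ?_, ?_, ?_, ?_⟩
    · -- facts
      intro a ha
      exact h ⟨FAtom.base a, ∅, ∅⟩ (Or.inl (Or.inl (Or.inl (Or.inl ⟨a, ha, rfl⟩))))
        (Set.empty_subset N) (fun x hx => absurd hx (Set.notMem_empty x))
    · -- chain(nil,nil)
      refine h ⟨chA nil nil, ∅, ∅⟩ ?_ (Set.empty_subset N)
        (fun x hx => absurd hx (Set.notMem_empty x))
      refine Or.inl (Or.inl (Or.inl (Or.inr ⟨⟨0, lt0 nil⟩, fun _ => nil, ?_, rfl, ?_⟩)))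
      · intro q hq; exact absurd hq (List.not_mem_nil)
      · rw [hd0 nil (lt0 nil) (fun _ => nil), pb0 nil (lt0 nil) (fun _ => nil)]
    · -- single
      intro x y hx h1 h2
      refine h ⟨cgA x y, {chA nil x, sA x y}, ∅⟩ ?_ (pair_subset h1 h2)
        (fun a ha => absurd ha (Set.notMem_empty a))
      refine Or.inl (Or.inl (Or.inl (Or.inr
        ⟨⟨2, lt2 nil⟩, fun n => if n = 0 then x else y, ?_, rfl, ?_⟩)))
      · intro q hq
        have hq' : q ∈ [((Term.var 0 : Term C), Term.const nil)] := hq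
        simp only [List.mem_cons, List.not_mem_nil, or_false] at hq'
        subst hq'
        exact hx
      · rw [hd2 nil (lt2 nil) _, pb2 nil (lt2 nil) _]
        rfl
    · -- multi
      intro a b o n h1 h2 h3
      refine h ⟨cgA b n, {chA a b, cgA a o, mA b o n}, ∅⟩ ?_ (triple_subset h1 h2 h3)
        (fun f hf => absurd hf (Set.notMem_empty f))
      refine Or.inl (Or.inl (Or.inl (Or.inr
        ⟨⟨3, lt3 nil⟩, fun k => if k = 0 then a else if k = 1 then b
          else if k = 2 then o else n, ?_, rfl, ?_⟩)))
      · intro q hq; exact absurd hq (List.not_mem_nil)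
      · rw [hd3 nil (lt3 nil) _, pb3 nil (lt3 nil) _]
        rfl
    · -- ereturn
      intro a b o yl h1 h2 h3
      refine h ⟨rA yl, {chA a b, cgA a o, eA b o yl}, ∅⟩ ?_ (triple_subset h1 h2 h3)
        (fun f hf => absurd hf (Set.notMem_empty f))
      refine Or.inl (Or.inl (Or.inl (Or.inr
        ⟨⟨4, lt4 nil⟩, fun k => if k = 0 then a else if k = 1 then b
          else if k = 2 then o else yl, ?_, rfl, ?_⟩)))
      · intro q hq; exact absurd hq (List.not_mem_nil)
      · rw [hd4 nil (lt4 nil) _, pb4 nil (lt4 nil) _]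
        rfl
    · -- chain rule
      intro x y z h0 h1 h2
      refine h ⟨chA x y, insert (choA x y) {chA z x, dA y}, ∅⟩ ?_
        (Set.insert_subset_iff.mpr ⟨h0, pair_subset h1 h2⟩)
        (fun f hf => absurd hf (Set.notMem_empty f))
      refine Or.inl (Or.inl (Or.inr
        ⟨⟨1, lt1 nil⟩, fun k => if k = 0 then x else if k = 1 then y else z,
          ?_, ?_, ?_⟩))
      · intro q hq; exact absurd hq (List.not_mem_nil)
      · exact List.cons_ne_nil _ _
      · rw [hd1 nil (lt1 nil) _, pb1 nil (lt1 nil) _, W1 nil (lt1 nil)]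
        rfl
    · -- chosen rule
      intro x y z hδ h1 h2
      refine h ⟨choA x y, {chA z x, dA y}, ∅⟩ ?_ (pair_subset h1 h2)
        (fun f hf => absurd hf (Set.notMem_empty f))
      refine Or.inl (Or.inr
        ⟨⟨1, lt1 nil⟩, fun k => if k = 0 then x else if k = 1 then y else z,
          ?_, ?_, ?_, ?_⟩)
      · intro q hq; exact absurd hq (List.not_mem_nil)
      · exact List.cons_ne_nil _ _
      · exact hδ
      · rw [pb1 nil (lt1 nil) _, W1 nil (lt1 nil)]
        rfl
    · -- diff rule (first choice goal)
      intro x y y' hne hcho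
      refine h ⟨dfA x y, {choA x y'}, ∅⟩ ?_ (Set.singleton_subset_iff.mpr hcho)
        (fun f hf => absurd hf (Set.notMem_empty f))
      refine Or.inr ⟨⟨1, lt1 nil⟩, ([0], [1]), ?_,
        (fun k => if k = 0 then x else y), (fun k => if k = 0 then x else y'),
        ?_, ⟨1, ?_, ?_⟩, ?_⟩
      · exact List.mem_cons_self
      · intro v hv
        simp only [List.mem_cons, List.not_mem_nil, or_false] at hv
        subst hv; rfl
      · exact List.mem_cons_self
      · exact fun hh => hne hh.symm
      · rw [W1 nil (lt1 nil)]
        rfl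
    · -- diff rule (second choice goal)
      intro x x' y hne hcho
      refine h ⟨dfA x y, {choA x' y}, ∅⟩ ?_ (Set.singleton_subset_iff.mpr hcho)
        (fun f hf => absurd hf (Set.notMem_empty f))
      refine Or.inr ⟨⟨1, lt1 nil⟩, ([1], [0]), ?_,
        (fun k => if k = 0 then x else y), (fun k => if k = 0 then x' else y),
        ?_, ⟨0, ?_, ?_⟩, ?_⟩
      · exact List.mem_cons_of_mem _ (List.mem_cons_self)
      · intro v hv
        simp only [List.mem_cons, List.not_mem_nil, or_false] at hv
        subst hv; rfl
      · exact List.mem_cons_self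
      · exact fun hh => hne hh.symm
      · rw [W1 nil (lt1 nil)]
        rfl
  · rintro ⟨H1, H2, H3, H4, H5, H6, H7, H8, H9⟩
    rintro r ((((⟨a, ha, rfl⟩ | ⟨⟨n, hn⟩, ν, hq, hc, rfl⟩) | ⟨⟨n, hn⟩, ν, hq, hc, rfl⟩) |
      ⟨⟨n, hn⟩, ν, hq, hc, hδ, rfl⟩) | ⟨⟨n, hn⟩, g, hg, ν, ν', hag, ⟨v, hv, hdne⟩, rfl⟩)
    · exact fun _ _ => H1 a ha
    · -- no-choice rules
      have hn5 : n < 5 := hn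
      interval_cases n
      · rw [hd0 nil hn ν, pb0 nil hn ν]
        exact fun _ _ => H2
      · exact absurd hc (List.cons_ne_nil _ _)
      · rw [hd2 nil hn ν, pb2 nil hn ν]
        intro hpos _
        have hx : ν 0 ≠ nil := hq (Term.var 0, Term.const nil) (List.mem_cons_self)
        exact H3 (ν 0) (ν 1) hx (hpos (Set.mem_insert _ _))
          (hpos (Set.mem_insert_of_mem _ rfl))
      · rw [hd3 nil hn ν, pb3 nil hn ν]
        intro hpos _
        exact H4 (ν 0) (ν 1) (ν 2) (ν 3) (hpos (Set.mem_insert _ _))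
          (hpos (Set.mem_insert_of_mem _ (Set.mem_insert _ _)))
          (hpos (Set.mem_insert_of_mem _ (Set.mem_insert_of_mem _ rfl)))
      · rw [hd4 nil hn ν, pb4 nil hn ν]
        intro hpos _
        exact H5 (ν 0) (ν 1) (ν 2) (ν 3) (hpos (Set.mem_insert _ _))
          (hpos (Set.mem_insert_of_mem _ (Set.mem_insert _ _)))
          (hpos (Set.mem_insert_of_mem _ (Set.mem_insert_of_mem _ rfl)))
    · -- chain rule with chosen goal
      have hn5 : n < 5 := hn
      interval_cases n
      · exact absurd rfl hc
      · rw [hd1 nil hn ν, pb1 nil hn ν, W1 nil hn]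
        intro hpos _
        exact H6 (ν 0) (ν 1) (ν 2) (hpos (Set.mem_insert _ _))
          (hpos (Set.mem_insert_of_mem _ (Set.mem_insert _ _)))
          (hpos (Set.mem_insert_of_mem _ (Set.mem_insert_of_mem _ rfl)))
      · exact absurd rfl hc
      · exact absurd rfl hc
      · exact absurd rfl hc
    · -- chosen rule
      have hn5 : n < 5 := hn
      interval_cases n
      · exact absurd rfl hc
      · rw [pb1 nil hn ν, W1 nil hn] at *
        intro hpos _
        exact H7 (ν 0) (ν 1) (ν 2) hδ (hpos (Set.mem_insert _ _))
          (hpos (Set.mem_insert_of_mem _ rfl))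
      · exact absurd rfl hc
      · exact absurd rfl hc
      · exact absurd rfl hc
    · -- diff rules
      have hn5 : n < 5 := hn
      interval_cases n
      · exact absurd hg (List.not_mem_nil)
      · rw [W1 nil hn]
        have hg2 : g ∈ [(([0], [1]) : List ℕ × List ℕ), ([1], [0])] := hg
        have hg' : g = ([0], [1]) ∨ g = ([1], [0]) := by
          simpa using hg2
        rcases hg' with rfl | rfl
        · have hx : ν 0 = ν' 0 := hag 0 (List.mem_cons_self)
          have hv1 : v = 1 := by simpa using hv
          subst hv1
          intro hpos _
          show dfA (ν 0) (ν 1) ∈ N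
          have hb : choA (ν 0) (ν' 1) ∈ N := by
            have := hpos rfl
            show FAtom.chosen 1 [ν' 1, ν 0] ∈ N
            rw [hx]
            exact this
          exact H8 (ν 0) (ν 1) (ν' 1) (Ne.symm hdne) hb
        · have hy : ν 1 = ν' 1 := hag 1 (List.mem_cons_self)
          have hv0 : v = 0 := by simpa using hv
          subst hv0
          intro hpos _
          show dfA (ν 0) (ν 1) ∈ N
          have hb : choA (ν' 0) (ν 1) ∈ N := by
            have := hpos rfl
            show FAtom.chosen 1 [ν 1, ν' 0] ∈ N
            rw [hy]
            exact this
          exact H9 (ν 0) (ν' 0) (ν 1) (Ne.symm hdne) hb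
      · exact absurd hg (List.not_mem_nil)
      · exact absurd hg (List.not_mem_nil)
      · exact absurd hg (List.not_mem_nil)

end Closed
section Infra

variable {C : Type}

/-- reachability from `nil` along an edge relation -/
inductive ReachRel (E : C → C → Prop) (nil : C) : C → Prop
  | base : ReachRel E nil nil
  | step {x y : C} : ReachRel E nil x → E x y → ReachRel E nil y

/-- consecutive elements of a list -/
def adjL : List C → C → C → Prop
  | a :: b :: l => fun x y => (x = a ∧ y = b) ∨ adjL (b :: l) x y
  | _ => fun _ _ => False

lemma adjL_src_mem : ∀ (l : List C) (x y : C), adjL l x y → x ∈ l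
  | [], _, _, h => h.elim
  | [_], _, _, h => h.elim
  | a :: b :: l, x, y, h => by
      rcases h with ⟨rfl, rfl⟩ | h
      · exact List.mem_cons_self
      · exact List.mem_cons_of_mem _ (adjL_src_mem (b :: l) x y h)

lemma adjL_tgt_tail : ∀ (l : List C) (x y : C), adjL l x y → y ∈ l.tail
  | [], _, _, h => h.elim
  | [_], _, _, h => h.elim
  | a :: b :: l, x, y, h => by
      rcases h with ⟨rfl, rfl⟩ | h
      · exact List.mem_cons_self
      · exact List.mem_cons_of_mem _ (adjL_tgt_tail (b :: l) x y h)

lemma adjL_fun : ∀ (l : List C), l.Nodup → ∀ x y y', adjL l x y → adjL l x y' → y = y'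
  | [], _, _, _, _, h, _ => h.elim
  | [_], _, _, _, _, h, _ => h.elim
  | a :: b :: l, hnd, x, y, y', h, h' => by
      have hnd' : (b :: l).Nodup := hnd.of_cons
      have hna : a ∉ b :: l := (List.nodup_cons.mp hnd).1
      rcases h with ⟨rfl, rfl⟩ | h
      · rcases h' with ⟨_, rfl⟩ | h'
        · rfl
        · exact absurd (adjL_src_mem _ _ _ h') hna
      · rcases h' with ⟨rfl, rfl⟩ | h'
        · exact absurd (adjL_src_mem _ _ _ h) hna
        · exact adjL_fun (b :: l) hnd' x y y' h h'

lemma adjL_inj : ∀ (l : List C), l.Nodup → ∀ x x' y, adjL l x y → adjL l x' y → x = x'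
  | [], _, _, _, _, h, _ => h.elim
  | [_], _, _, _, _, h, _ => h.elim
  | a :: b :: l, hnd, x, x', y, h, h' => by
      have hnd' : (b :: l).Nodup := hnd.of_cons
      have hnb : b ∉ l := (List.nodup_cons.mp hnd').1
      rcases h with ⟨rfl, rfl⟩ | h
      · rcases h' with ⟨rfl, _⟩ | h'
        · rfl
        · exact absurd (adjL_tgt_tail _ _ _ h') hnb
      · rcases h' with ⟨rfl, rfl⟩ | h'
        · exact absurd (adjL_tgt_tail _ _ _ h) hnb
        · exact adjL_inj (b :: l) hnd' x x' y h h'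

lemma adjL_cover : ∀ (l : List C) (a y : C), y ∈ l → ∃ x, adjL (a :: l) x y := by
  intro l
  induction l with
  | nil => intro a y hy; exact absurd hy (List.not_mem_nil)
  | cons b t ih =>
      intro a y hy
      rcases List.mem_cons.mp hy with rfl | hy
      · exact ⟨a, Or.inl ⟨rfl, rfl⟩⟩
      · obtain ⟨x, hx⟩ := ih b y hy
        exact ⟨x, Or.inr hx⟩

lemma tail_reach (E : C → C → Prop) (nil : C) :
    ∀ (l : List C) (a : C), ReachRel E nil a →
      (∀ x y, adjL (a :: l) x y → E x y) → ∀ y ∈ a :: l, ReachRel E nil y := by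
  intro l
  induction l with
  | nil =>
      intro a ha _ y hy
      rcases List.mem_cons.mp hy with rfl | hy
      · exact ha
      · exact absurd hy (List.not_mem_nil)
  | cons b t ih =>
      intro a ha hadj y hy
      have hb : ReachRel E nil b := ha.step (hadj a b (Or.inl ⟨rfl, rfl⟩))
      rcases List.mem_cons.mp hy with rfl | hy
      · exact ha
      · exact ih b hb (fun x y h => hadj x y (Or.inr h)) y hy

lemma exists_last (E : C → C → Prop) (nil : C) (D : Set C) (hD : D.Finite)
    (hnil : nil ∉ D) (htgt : ∀ x y, E x y → y ∈ D)
    (hinj : ∀ x x' y, E x y → E x' y → x = x') :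
    ∃ u, ReachRel E nil u ∧ ∀ y, ¬ E u y := by
  by_contra hcon
  push_neg at hcon
  have hsub : {x | ReachRel E nil x} ⊆ insert nil D := by
    intro x hx
    induction hx with
    | base => exact Set.mem_insert _ _
    | step _ hE _ => exact Set.mem_insert_of_mem _ (htgt _ _ hE)
  have hfin : {x | ReachRel E nil x}.Finite := (hD.insert nil).subset hsub
  have : Finite {x // ReachRel E nil x} := hfin
  choose f hf using fun (u : {x // ReachRel E nil x}) => hcon u.1 u.2
  let g : {x // ReachRel E nil x} → {x // ReachRel E nil x} :=
    fun u => ⟨f u, u.2.step (hf u)⟩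
  have hginj : Function.Injective g := by
    intro u v huv
    have hfe : f u = f v := congrArg Subtype.val huv
    exact Subtype.ext (hinj _ _ _ (hfe ▸ hf u) (hf v))
  obtain ⟨u, hu⟩ := (Finite.injective_iff_surjective.mp hginj) ⟨nil, ReachRel.base⟩
  have hE : E u.1 nil := by
    have h1 : f u = nil := congrArg Subtype.val hu
    have h2 := hf u
    rw [h1] at h2
    exact h2
  exact hnil (htgt _ _ hE)

/-- the `Qd` program only depends on which `diff` atoms for rule `1` hold -/
lemma Qd_congr (nil : C) (e : Set (GAtom uSchema C)) (δ1 δ2 : ℕ → List C → Prop)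
    (h : ∀ w, δ1 1 w ↔ δ2 1 w) :
    Qd (udaProg C nil) e δ1 = Qd (udaProg C nil) e δ2 := by
  have key : ∀ (δa δb : ℕ → List C → Prop), (∀ w, δa 1 w ↔ δb 1 w) →
      Qd (udaProg C nil) e δa ⊆ Qd (udaProg C nil) e δb := by
    intro δa δb hab
    rintro r ((((hf | hf) | hf) | ⟨⟨n, hn⟩, ν, hq, hc, hδ, rfl⟩) | hf)
    · exact Or.inl (Or.inl (Or.inl (Or.inl hf)))
    · exact Or.inl (Or.inl (Or.inl (Or.inr hf)))
    · exact Or.inl (Or.inl (Or.inr hf))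
    · refine Or.inl (Or.inr ⟨⟨n, hn⟩, ν, hq, hc, ?_, rfl⟩)
      have hn5 : n < 5 := hn
      interval_cases n <;> first
        | exact absurd rfl hc
        | (intro hh; exact hδ ((hab _).mpr hh))
    · exact Or.inr hf
  exact Set.Subset.antisymm (key δ1 δ2 h) (key δ2 δ1 fun w => (h w).symm)

lemma udaEdb_mono {D D' : Set C} {sg : C → C → Prop} {ml er : C → C → C → Prop}
    (hsub : D ⊆ D') : udaEdb D sg ml er ⊆ udaEdb D' sg ml er := by
  rintro a (((⟨c, hc, rfl⟩ | h) | h) | h)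
  · exact Or.inl (Or.inl (Or.inl ⟨c, hsub hc, rfl⟩))
  · exact Or.inl (Or.inl (Or.inr h))
  · exact Or.inl (Or.inr h)
  · exact Or.inr h

lemma mem_edb_d {D : Set C} {sg : C → C → Prop} {ml er : C → C → C → Prop} {y : C}
    (hy : y ∈ D) : (⟨UPred.d, ![y]⟩ : GAtom uSchema C) ∈ udaEdb D sg ml er :=
  Or.inl (Or.inl (Or.inl ⟨y, hy, rfl⟩))

/-- constructor/predicate discriminator -/
def fpred : FAtom uSchema C → Option UPred
  | FAtom.base a => some a.p
  | _ => none

lemma chA_inj {z x z' x' : C} (h : chA z x = chA z' x') : z = z' ∧ x = x' :=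
  ⟨congrArg (fun f => match f with | FAtom.base ⟨UPred.chain, v⟩ => v ⟨0, by decide⟩ | _ => z) h,
   congrArg (fun f => match f with | FAtom.base ⟨UPred.chain, v⟩ => v ⟨1, by decide⟩ | _ => x) h⟩

lemma dA_inj {y y' : C} (h : dA y = dA y') : y = y' :=
  congrArg (fun f => match f with | FAtom.base ⟨UPred.d, v⟩ => v ⟨0, by decide⟩ | _ => y) h

end Infra
section Deletion

variable {C : Type}

/-- edges chosen in a model -/
def EdgeM (M : Set (FAtom uSchema C)) : C → C → Prop := fun x y => choA x y ∈ M

/-- the diff-atom predicate generated by an edge relation -/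
def deltaOf (E : C → C → Prop) : ℕ → List C → Prop := fun i w =>
  i = 1 ∧ ∃ x y, w = [y, x] ∧ ((∃ y', y' ≠ y ∧ E x y') ∨ (∃ x', x' ≠ x ∧ E x' y))

def PhiC (M : Set (FAtom uSchema C)) : ℕ → List C → Prop := fun i w =>
  i = 1 ∧ ∃ x y z, w = [y, x] ∧ chA z x ∈ M ∧ dA y ∈ M ∧ dfA x y ∉ M

def PhiCh (E : C → C → Prop) (nil : C) : C → C → Prop := fun z x =>
  (z = nil ∧ x = nil) ∨ (ReachRel E nil z ∧ E z x)

def badPM (M : Set (FAtom uSchema C)) (nil : C) (D : Set C) : FAtom uSchema C → Prop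
  | FAtom.chosen i w => ¬ PhiC M i w
  | FAtom.diff i w => ¬ deltaOf (EdgeM M) i w
  | FAtom.base ⟨UPred.d, v⟩ => v ⟨0, by decide⟩ ∉ D
  | FAtom.base ⟨UPred.chain, v⟩ =>
      ¬ PhiCh (EdgeM M) nil (v ⟨0, by decide⟩) (v ⟨1, by decide⟩)
  | _ => False

lemma deletionM (nil : C) (D : Set C) (sg : C → C → Prop) (ml er : C → C → C → Prop)
    (M : Set (FAtom uSchema C))
    (h : Closed nil (udaEdb D sg ml er) (fun i w => FAtom.diff i w ∈ M) M) :
    Closed nil (udaEdb D sg ml er) (fun i w => FAtom.diff i w ∈ M)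
      {f | f ∈ M ∧ ¬ badPM M nil D f} := by
  obtain ⟨m1, m2, m3, m4, m5, m6, m7, m8, m9⟩ := h
  refine ⟨?_, ?_, ?_, ?_, ?_, ?_, ?_, ?_, ?_⟩
  · rintro a (((⟨c, hc, rfl⟩ | ⟨x, y, hxy, rfl⟩) | ⟨x, y, z, hz, rfl⟩) | ⟨x, y, z, hz, rfl⟩)
    · exact ⟨m1 _ (mem_edb_d hc), fun hb => hb hc⟩
    · exact ⟨m1 _ (Or.inl (Or.inl (Or.inr ⟨x, y, hxy, rfl⟩))), fun hb => hb⟩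
    · exact ⟨m1 _ (Or.inl (Or.inr ⟨x, y, z, hz, rfl⟩)), fun hb => hb⟩
    · exact ⟨m1 _ (Or.inr ⟨x, y, z, hz, rfl⟩), fun hb => hb⟩
  · exact ⟨m2, fun hb => hb (Or.inl ⟨rfl, rfl⟩)⟩
  · intro x y hx h1 h2
    exact ⟨m3 x y hx h1.1 h2.1, fun hb => hb⟩
  · intro a b o n h1 h2 h3
    exact ⟨m4 a b o n h1.1 h2.1 h3.1, fun hb => hb⟩
  · intro a b o yl h1 h2 h3
    exact ⟨m5 a b o yl h1.1 h2.1 h3.1, fun hb => hb⟩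
  · intro x y z h0 h1 h2
    have hch : PhiCh (EdgeM M) nil z x := not_not.mp h1.2
    have hreach : ReachRel (EdgeM M) nil x := by
      rcases hch with ⟨rfl, rfl⟩ | ⟨hz, hE⟩
      · exact ReachRel.base
      · exact hz.step hE
    exact ⟨m6 x y z h0.1 h1.1 h2.1, fun hb => hb (Or.inr ⟨hreach, h0.1⟩)⟩
  · intro x y z hδ h1 h2
    exact ⟨m7 x y z hδ h1.1 h2.1, fun hb => hb ⟨rfl, x, y, z, rfl, h1.1, h2.1, hδ⟩⟩
  · intro x y y' hne hc
    exact ⟨m8 x y y' hne hc.1, fun hb => hb ⟨rfl, x, y, rfl, Or.inl ⟨y', hne, hc.1⟩⟩⟩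
  · intro x x' y hne hc
    exact ⟨m9 x x' y hne hc.1, fun hb => hb ⟨rfl, x, y, rfl, Or.inr ⟨x', hne, hc.1⟩⟩⟩

def badPC (E : C → C → Prop) (D' : Set C) : FAtom uSchema C → Prop
  | FAtom.chosen i w => ¬ (i = 1 ∧ ∃ x y, w = [y, x] ∧ E x y)
  | FAtom.diff i w => ¬ deltaOf E i w
  | FAtom.base ⟨UPred.d, v⟩ => v ⟨0, by decide⟩ ∉ D'
  | _ => False

lemma deletionM' (nil : C) (D' : Set C) (sg : C → C → Prop) (ml er : C → C → C → Prop)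
    (E : C → C → Prop) (M' : Set (FAtom uSchema C))
    (hcov : ∀ y ∈ D', ∃ x, E x y)
    (h : Closed nil (udaEdb D' sg ml er) (deltaOf E) M') :
    Closed nil (udaEdb D' sg ml er) (deltaOf E) {f | f ∈ M' ∧ ¬ badPC E D' f} := by
  obtain ⟨n1, n2, n3, n4, n5, n6, n7, n8, n9⟩ := h
  refine ⟨?_, ?_, ?_, ?_, ?_, ?_, ?_, ?_, ?_⟩
  · rintro a (((⟨c, hc, rfl⟩ | ⟨x, y, hxy, rfl⟩) | ⟨x, y, z, hz, rfl⟩) | ⟨x, y, z, hz, rfl⟩)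
    · exact ⟨n1 _ (mem_edb_d hc), fun hb => hb hc⟩
    · exact ⟨n1 _ (Or.inl (Or.inl (Or.inr ⟨x, y, hxy, rfl⟩))), fun hb => hb⟩
    · exact ⟨n1 _ (Or.inl (Or.inr ⟨x, y, z, hz, rfl⟩)), fun hb => hb⟩
    · exact ⟨n1 _ (Or.inr ⟨x, y, z, hz, rfl⟩), fun hb => hb⟩
  · exact ⟨n2, fun hb => hb⟩
  · intro x y hx h1 h2
    exact ⟨n3 x y hx h1.1 h2.1, fun hb => hb⟩
  · intro a b o n h1 h2 h3
    exact ⟨n4 a b o n h1.1 h2.1 h3.1, fun hb => hb⟩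
  · intro a b o yl h1 h2 h3
    exact ⟨n5 a b o yl h1.1 h2.1 h3.1, fun hb => hb⟩
  · intro x y z h0 h1 h2
    exact ⟨n6 x y z h0.1 h1.1 h2.1, fun hb => hb⟩
  · intro x y z hδ h1 h2
    have hyD : y ∈ D' := not_not.mp h2.2
    obtain ⟨x₀, hx₀⟩ := hcov y hyD
    have hE : E x y := by
      by_cases hxx : x₀ = x
      · exact hxx ▸ hx₀
      · exact absurd ⟨rfl, x, y, rfl, Or.inr ⟨x₀, hxx, hx₀⟩⟩ hδ
    exact ⟨n7 x y z hδ h1.1 h2.1, fun hb => hb ⟨rfl, x, y, rfl, hE⟩⟩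
  · intro x y y' hne hc
    have hcc : ¬ ¬ ((1 : ℕ) = 1 ∧ ∃ a b, [y', x] = [b, a] ∧ E a b) := hc.2
    obtain ⟨-, x₁, y₁, hw, hE₁⟩ := not_not.mp hcc
    have hw' : y₁ = y' ∧ x₁ = x := by
      have := hw
      simp only [List.cons.injEq, and_true] at this
      exact ⟨this.1.symm, this.2.symm⟩
    have hE₂ : E x y' := by rw [hw'.1, hw'.2] at hE₁; exact hE₁
    exact ⟨n8 x y y' hne hc.1, fun hb => hb ⟨rfl, x, y, rfl, Or.inl ⟨y', hne, hE₂⟩⟩⟩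
  · intro x x' y hne hc
    have hcc : ¬ ¬ ((1 : ℕ) = 1 ∧ ∃ a b, [y, x'] = [b, a] ∧ E a b) := hc.2
    obtain ⟨-, x₁, y₁, hw, hE₁⟩ := not_not.mp hcc
    have hw' : y₁ = y ∧ x₁ = x' := by
      have := hw
      simp only [List.cons.injEq, and_true] at this
      exact ⟨this.1.symm, this.2.symm⟩
    have hE₂ : E x' y := by rw [hw'.1, hw'.2] at hE₁; exact hE₁
    exact ⟨n9 x x' y hne hc.1, fun hb => hb ⟨rfl, x, y, rfl, Or.inr ⟨x', hne, hE₂⟩⟩⟩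

end Deletion
/-- A user-defined aggregate given by `single`, `multi` and
`ereturn` rules only (no `freturn`) is monotonic with respect to set
containment: its defining logic program is a positive choice program, and
enlarging the aggregated set `D ⊆ D'` extends every choice model `M` of the
program on `D` to a choice model `M' ⊇ M` of the program on `D'` (so, in
particular, the early returns `results` grow monotonically, and the aggregate
may be used without restriction in recursive rules). -/
theorem uda_without_freturn_is_monotonic
    {C : Type} (nil : C) (sg : C → C → Prop) (ml er : C → C → C → Prop)
    (D D' : Set C) (hfin : D'.Finite) (hnil : nil ∉ D') (hsub : D ⊆ D') :
    (udaProg C nil).Positive ∧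
    ∀ M, IsStableModel (foe (udaProg C nil) (udaEdb D sg ml er)) M →
      ∃ M', IsStableModel (foe (udaProg C nil) (udaEdb D' sg ml er)) M' ∧
        M ⊆ M' := by
  constructor
  · exact udaProg_pos nil
  intro M hM
  have hpos : ∀ r ∈ udaProg C nil, r.neg = [] := udaProg_pos nil
  have hMeq : M = leastModel (Qd (udaProg C nil) (udaEdb D sg ml er)
      (fun i w => FAtom.diff i w ∈ M)) := by
    rw [← reduct_foe_eq hpos]; exact hM
  have hMcl : Closed nil (udaEdb D sg ml er) (fun i w => FAtom.diff i w ∈ M) M := by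
    apply (isModel_Qd_uda nil).mp
    have h0 := isModel_leastModel
      (P := Qd (udaProg C nil) (udaEdb D sg ml er) (fun i w => FAtom.diff i w ∈ M)) Qd_neg
    rwa [← hMeq] at h0
  obtain ⟨m1, m2, m3, m4, m5, m6, m7, m8, m9⟩ := id hMcl
  -- the deletion ("supported atoms") characterisation of M
  have hNsub : M ⊆ {f | f ∈ M ∧ ¬ badPM M nil D f} := by
    have h1 := leastModel_subset ((isModel_Qd_uda nil).mpr (deletionM nil D sg ml er M hMcl))
    rwa [← hMeq] at h1
  have hchar : ∀ f ∈ M, ¬ badPM M nil D f := fun f hf => (hNsub hf).2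
  have char_cho : ∀ x y : C, choA x y ∈ M →
      ∃ z, chA z x ∈ M ∧ dA y ∈ M ∧ dfA x y ∉ M := by
    intro x y h
    have h2 : ¬ ¬ PhiC M 1 [y, x] := hchar _ h
    obtain ⟨-, x', y', z, hw, h3, h4, h5⟩ := not_not.mp h2
    simp only [List.cons.injEq, and_true] at hw
    rw [← hw.1] at h4 h5
    rw [← hw.2] at h3 h5
    exact ⟨z, h3, h4, h5⟩
  have char_d : ∀ y : C, dA y ∈ M → y ∈ D := fun y h => not_not.mp (hchar _ h)
  have char_df : ∀ x y : C, dfA x y ∈ M →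
      (∃ y', y' ≠ y ∧ EdgeM M x y') ∨ (∃ x', x' ≠ x ∧ EdgeM M x' y) := by
    intro x y h
    have h2 : ¬ ¬ deltaOf (EdgeM M) 1 [y, x] := hchar _ h
    obtain ⟨-, x', y', hw, hcase⟩ := not_not.mp h2
    simp only [List.cons.injEq, and_true] at hw
    rw [← hw.1, ← hw.2] at hcase
    exact hcase
  have char_ch : ∀ z x : C, chA z x ∈ M → PhiCh (EdgeM M) nil z x :=
    fun z x h => not_not.mp (hchar _ h)
  -- structure of the chosen edges
  have hEtgt : ∀ x y : C, EdgeM M x y → y ∈ D := by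
    intro x y h
    obtain ⟨z, -, h2, -⟩ := char_cho x y h
    exact char_d y h2
  have hEsrc : ∀ x y : C, EdgeM M x y → ReachRel (EdgeM M) nil x := by
    intro x y h
    obtain ⟨z, h1, -, -⟩ := char_cho x y h
    rcases char_ch z x h1 with ⟨rfl, rfl⟩ | ⟨hz, hE⟩
    · exact ReachRel.base
    · exact hz.step hE
  have hEfun : ∀ x y y' : C, EdgeM M x y → EdgeM M x y' → y = y' := by
    intro x y y' h h'
    by_contra hne
    obtain ⟨z, -, -, h3⟩ := char_cho x y h
    exact h3 (m8 x y y' (fun hh => hne hh.symm) h')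
  have hEinj : ∀ x x' y : C, EdgeM M x y → EdgeM M x' y → x = x' := by
    intro x x' y h h'
    by_contra hne
    obtain ⟨z, -, -, h3⟩ := char_cho x y h
    exact h3 (m9 x x' y (fun hh => hne hh.symm) h')
  have hsupp : ∀ x : C, ReachRel (EdgeM M) nil x → ∃ z, chA z x ∈ M := by
    intro x hx
    induction hx with
    | base => exact ⟨nil, m2⟩
    | step hx hE ih =>
        obtain ⟨z, hz⟩ := ih
        obtain ⟨z', -, h2, -⟩ := char_cho _ _ hE
        exact ⟨_, m6 _ _ z hE hz h2⟩
  have hreachD : ∀ x : C, ReachRel (EdgeM M) nil x → x = nil ∨ x ∈ D := by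
    intro x hx
    induction hx with
    | base => exact Or.inl rfl
    | step hx hE ih => exact Or.inr (hEtgt _ _ hE)
  have hnilD : nil ∉ D := fun h => hnil (hsub h)
  obtain ⟨u, hu, hulast⟩ :=
    exists_last (EdgeM M) nil D (hfin.subset hsub) hnilD hEtgt hEinj
  have hcover : ∀ y ∈ D, ∃ x, EdgeM M x y := by
    intro y hy
    by_contra hnc
    push_neg at hnc
    have hdfn : dfA u y ∉ M := by
      intro hdf
      rcases char_df u y hdf with ⟨y', -, hE⟩ | ⟨x', -, hE⟩
      · exact hulast y' hE
      · exact hnc x' hE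
    obtain ⟨z, hz⟩ := hsupp u hu
    exact hnc u (m7 u y z hdfn hz (m1 _ (mem_edb_d hy)))
  -- the new tail of elements of D' \ D
  have hdfin : (D' \ D).Finite := hfin.subset Set.diff_subset
  set tl : List C := hdfin.toFinset.toList with htl
  have htl_mem : ∀ y : C, y ∈ tl ↔ y ∈ D' \ D := by
    intro y; rw [htl, Finset.mem_toList, Set.Finite.mem_toFinset]
  have htl_nd : tl.Nodup := by rw [htl]; exact Finset.nodup_toList _
  have hu_ntl : u ∉ tl := by
    intro hmem
    have h2 := (htl_mem u).mp hmem
    rcases hreachD u hu with rfl | hD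
    · exact hnil h2.1
    · exact h2.2 hD
  -- the extended edge relation
  obtain ⟨E', hE'intro⟩ :
      ∃ E' : C → C → Prop, E' = fun x y => EdgeM M x y ∨ adjL (u :: tl) x y := ⟨_, rfl⟩
  have hE'I1 : ∀ x y : C, EdgeM M x y → E' x y := by
    intro x y h; rw [hE'intro]; exact Or.inl h
  have hE'I2 : ∀ x y : C, adjL (u :: tl) x y → E' x y := by
    intro x y h; rw [hE'intro]; exact Or.inr h
  have hE'E : ∀ x y : C, E' x y → EdgeM M x y ∨ adjL (u :: tl) x y := by
    intro x y h; rwa [hE'intro] at h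
  have hExcl : ∀ x y y' : C, EdgeM M x y → adjL (u :: tl) x y' → False := by
    intro x y y' hE hadj
    rcases List.mem_cons.mp (adjL_src_mem _ _ _ hadj) with rfl | hxtl
    · exact hulast y hE
    · have h2 := (htl_mem x).mp hxtl
      rcases hreachD x (hEsrc _ _ hE) with rfl | hD
      · exact hnil h2.1
      · exact h2.2 hD
  have hndl : (u :: tl).Nodup := List.nodup_cons.mpr ⟨hu_ntl, htl_nd⟩
  have hE'fun : ∀ x y y' : C, E' x y → E' x y' → y = y' := by
    intro x y y' h h'
    rcases hE'E _ _ h with h1 | h1 <;> rcases hE'E _ _ h' with h2 | h2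
    · exact hEfun x y y' h1 h2
    · exact (hExcl x y y' h1 h2).elim
    · exact (hExcl x y' y h2 h1).elim
    · exact adjL_fun _ hndl x y y' h1 h2
  have hE'inj : ∀ x x' y : C, E' x y → E' x' y → x = x' := by
    intro x x' y h h'
    rcases hE'E _ _ h with h1 | h1 <;> rcases hE'E _ _ h' with h2 | h2
    · exact hEinj x x' y h1 h2
    · exact (((htl_mem y).mp (adjL_tgt_tail _ _ _ h2)).2 (hEtgt _ _ h1)).elim
    · exact (((htl_mem y).mp (adjL_tgt_tail _ _ _ h1)).2 (hEtgt _ _ h2)).elim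
    · exact adjL_inj _ hndl x x' y h1 h2
  have hE'cov : ∀ y ∈ D', ∃ x, E' x y := by
    intro y hy
    by_cases hyD : y ∈ D
    · obtain ⟨x, hx⟩ := hcover y hyD
      exact ⟨x, hE'I1 _ _ hx⟩
    · obtain ⟨x, hx⟩ := adjL_cover tl u y ((htl_mem y).mpr ⟨hy, hyD⟩)
      exact ⟨x, hE'I2 _ _ hx⟩
  have hE'tgt : ∀ x y : C, E' x y → y ∈ D' := by
    intro x y h
    rcases hE'E _ _ h with h1 | h1
    · exact hsub (hEtgt _ _ h1)
    · exact ((htl_mem y).mp (adjL_tgt_tail _ _ _ h1)).1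
  -- the new model
  obtain ⟨M', hM'intro⟩ : ∃ X : Set (FAtom uSchema C),
      X = leastModel (Qd (udaProg C nil) (udaEdb D' sg ml er) (deltaOf E')) := ⟨_, rfl⟩
  have hM'cl : Closed nil (udaEdb D' sg ml er) (deltaOf E') M' := by
    have h0 := isModel_leastModel
      (P := Qd (udaProg C nil) (udaEdb D' sg ml er) (deltaOf E')) Qd_neg
    rw [← hM'intro] at h0
    exact (isModel_Qd_uda nil).mp h0
  obtain ⟨n1, n2, n3, n4, n5, n6, n7, n8, n9⟩ := id hM'cl
  have hnoδ' : ∀ x y : C, E' x y → ¬ deltaOf E' 1 [y, x] := by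
    rintro x y hE ⟨-, x', y', hw, hcase⟩
    simp only [List.cons.injEq, and_true] at hw
    rw [← hw.1, ← hw.2] at hcase
    rcases hcase with ⟨y'', hne, hE2⟩ | ⟨x'', hne, hE2⟩
    · exact hne (hE'fun x y'' y hE2 hE)
    · exact hne (hE'inj x'' x y hE2 hE)
  have hfactM' : ∀ y ∈ D', dA y ∈ M' := fun y hy => n1 _ (mem_edb_d hy)
  have hedge : ∀ x y : C, (∃ z, chA z x ∈ M') → E' x y →
      choA x y ∈ M' ∧ chA x y ∈ M' := by
    rintro x y ⟨z, hz⟩ hE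
    have hd := hfactM' y (hE'tgt x y hE)
    have hc := n7 x y z (hnoδ' x y hE) hz hd
    exact ⟨hc, n6 x y z hc hz hd⟩
  have hsupp' : ∀ x : C, ReachRel E' nil x → ∃ z, chA z x ∈ M' := by
    intro x hx
    induction hx with
    | base => exact ⟨nil, n2⟩
    | step hx hE ih => exact ⟨_, (hedge _ _ ih hE).2⟩
  have hreach' : ∀ x : C, ReachRel (EdgeM M) nil x → ReachRel E' nil x := by
    intro x hx
    induction hx with
    | base => exact ReachRel.base
    | step hx hE ih => exact ih.step (hE'I1 _ _ hE)
  have htlreach : ∀ y ∈ u :: tl, ReachRel E' nil y :=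
    tail_reach E' nil tl u (hreach' u hu) (fun x y h => hE'I2 _ _ h)
  have hE'cho : ∀ x y : C, E' x y → choA x y ∈ M' ∧ chA x y ∈ M' := by
    intro x y hE
    have hx : ReachRel E' nil x := by
      rcases hE'E _ _ hE with h1 | h1
      · exact hreach' x (hEsrc _ _ h1)
      · exact htlreach x (adjL_src_mem _ _ _ h1)
    exact hedge x y (hsupp' x hx) hE
  -- characterisation of the diff atoms of M'
  have hN'sub : M' ⊆ {f | f ∈ M' ∧ ¬ badPC E' D' f} := by
    have h1 := leastModel_subset
      ((isModel_Qd_uda nil).mpr (deletionM' nil D' sg ml er E' M' hE'cov hM'cl))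
    rwa [← hM'intro] at h1
  have hchar' : ∀ f ∈ M', ¬ badPC E' D' f := fun f hf => (hN'sub hf).2
  have hδiff : ∀ w : List C, (FAtom.diff 1 w ∈ M') ↔ deltaOf E' 1 w := by
    intro w
    constructor
    · exact fun h => not_not.mp (hchar' _ h)
    · rintro ⟨-, x, y, rfl, hcase⟩
      rcases hcase with ⟨y', hne, hE⟩ | ⟨x', hne, hE⟩
      · exact n8 x y y' hne (hE'cho _ _ hE).1
      · exact n9 x x' y hne (hE'cho _ _ hE).1
  refine ⟨M', ?_, ?_⟩
  · -- M' is a stable model of the program over D'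
    show M' = leastModel (reduct (foe (udaProg C nil) (udaEdb D' sg ml er)) M')
    rw [reduct_foe_eq hpos (udaEdb D' sg ml er) M',
      Qd_congr nil (udaEdb D' sg ml er) _ (deltaOf E') hδiff]
    exact hM'intro
  · -- M ⊆ M'
    have hint : Closed nil (udaEdb D sg ml er) (fun i w => FAtom.diff i w ∈ M)
        (M ∩ M') := by
      refine ⟨?_, ?_, ?_, ?_, ?_, ?_, ?_, ?_, ?_⟩
      · intro a ha; exact ⟨m1 a ha, n1 a (udaEdb_mono hsub ha)⟩
      · exact ⟨m2, n2⟩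
      · intro x y hx h1 h2; exact ⟨m3 x y hx h1.1 h2.1, n3 x y hx h1.2 h2.2⟩
      · intro a b o n h1 h2 h3
        exact ⟨m4 _ _ _ _ h1.1 h2.1 h3.1, n4 _ _ _ _ h1.2 h2.2 h3.2⟩
      · intro a b o yl h1 h2 h3
        exact ⟨m5 _ _ _ _ h1.1 h2.1 h3.1, n5 _ _ _ _ h1.2 h2.2 h3.2⟩
      · intro x y z h0 h1 h2
        exact ⟨m6 _ _ _ h0.1 h1.1 h2.1, n6 _ _ _ h0.2 h1.2 h2.2⟩
      · intro x y z hδ h1 h2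
        obtain ⟨x₀, hx₀⟩ := hcover y (char_d y h2.1)
        have hxx : x₀ = x := by
          by_contra hne
          exact hδ (m9 x x₀ y hne hx₀)
        rw [hxx] at hx₀
        exact ⟨hx₀, (hE'cho x y (hE'I1 _ _ hx₀)).1⟩
      · intro x y y' hne h1; exact ⟨m8 _ _ _ hne h1.1, n8 _ _ _ hne h1.2⟩
      · intro x x' y hne h1; exact ⟨m9 _ _ _ hne h1.1, n9 _ _ _ hne h1.2⟩
    have h1 := leastModel_subset ((isModel_Qd_uda nil).mpr hint)
    rw [← hMeq] at h1
    exact fun f hf => (h1 hf).2
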